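/- Let Γ be a finite simple connected graph and v an essential vertex whose closed star N(v) is a complete subgraph. Then N(v) equals the whole vertex set of Γ. -/
import Mathlib

/-- From a walk starting inside `S` and ending outside, there is an edge crossing `S`. -/
lemma exists_boundary_edge {V : Type*} (G : SimpleGraph V) (S : Set V) :
    ∀ {a b : V}, G.Walk a b → a ∈ S → b ∉ S →
      ∃ p q, p ∈ S ∧ q ∉ S ∧ G.Adj p q := by
  intro a b w
  induction w with
  | nil => intro ha hb; exact absurd ha hb
  | @cons x y z h p ih =>
    intro hx hz
    by_cases hy : y ∈ S
    · exact ih hy hz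
    · exact ⟨x, y, hx, hy, h⟩

/-- If `v` is an essential vertex of a finite simple connected graph whose closed star
is complete, then the closed star of `v` is the whole vertex set. -/
theorem closedStar_eq_univ_of_essential_complete
    {V : Type*} [Fintype V] (G : SimpleGraph V) (hconn : G.Connected) (v : V)
    (hess : ¬ ∃ w : V, w ≠ v ∧ insert v (G.neighborSet v) ⊂ insert w (G.neighborSet w))
    (hcomplete : ∀ u w : V, u ∈ insert v (G.neighborSet v) → w ∈ insert v (G.neighborSet v) →
      u ≠ w → G.Adj u w) :
    insert v (G.neighborSet v) = (Set.univ : Set V) := by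
  set S : Set V := insert v (G.neighborSet v) with hS
  by_contra hne
  obtain ⟨b, hb⟩ : ∃ b : V, b ∉ S := by
    by_contra h
    push_neg at h
    exact hne (Set.eq_univ_of_forall h)
  obtain ⟨p, q, hp, hq, hadj⟩ :=
    exists_boundary_edge G S ((hconn.preconnected v b).some) (Set.mem_insert v _) hb
  -- q is adjacent to p but not in S, so q ≠ v and ¬ G.Adj v q
  have hqv : q ≠ v := fun h => hq (h ▸ Set.mem_insert v _)
  have hpv : p ≠ v ∨ p = v := (em (p = v)).symm
  apply hess
  refine ⟨p, ?_, ?_⟩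
  · -- p ≠ v since q adjacent to p but q ∉ S (if p = v, q ∈ neighborSet v ⊆ S)
    intro h
    exact hq (Set.mem_insert_of_mem _ ((G.mem_neighborSet v q).2 (by rw [← h]; exact hadj)))
  · constructor
    · intro u hu
      by_cases hup : u = p
      · exact hup ▸ Set.mem_insert u _
      · exact Set.mem_insert_of_mem _ ((G.mem_neighborSet p u).2 (hcomplete p u hp hu (Ne.symm hup)))
    · intro hsub
      exact hq (hsub (Set.mem_insert_of_mem _ ((G.mem_neighborSet p q).2 hadj)))
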